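/- Let K ≥ 2, λ ∈ (0,1), and for each k ∈ {1, …, K} define μ^(k) := λ e_k + ((1−λ)/K) 𝟙 ∈ ℝ^K. Set L := log(1 + Kλ/(1−λ)). Then for all k ≠ ℓ, the Aitchison distance satisfies d_A(μ^(k), μ^(ℓ)) = √2 · L; equivalently d_A(μ^(k), μ^(ℓ))² = 2L². -/

import Mathlib

/-- The Aitchison distance on the open probability simplex in `ℝ^K`:
`d_A(x, y) := sqrt((1/(2K)) Σ_{i,j} (log(x_i/x_j) − log(y_i/y_j))²)`. -/
noncomputable def aitchisonDist (K : ℕ) (x y : Fin K → ℝ) : ℝ :=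
  Real.sqrt ((1 / (2 * (K : ℝ))) *
    ∑ i, ∑ j, (Real.log (x i / x j) - Real.log (y i / y j)) ^ 2)

/-- The smoothed one-hot vector `μ^(k) := λ e_k + ((1−λ)/K) 𝟙 ∈ ℝ^K`. -/
noncomputable def smoothOneHot (K : ℕ) (lam : ℝ) (k : Fin K) : Fin K → ℝ :=
  fun i => lam * (if i = k then 1 else 0) + (1 - lam) / (K : ℝ)

lemma sum_sq_expand {K : ℕ} (g : Fin K → ℝ) :
    ∑ i, ∑ j, (g i - g j) ^ 2
      = 2 * (K : ℝ) * (∑ i, (g i) ^ 2) - 2 * (∑ i, g i) ^ 2 := by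
  have h1 : ∀ i : Fin K, ∑ j, (g i - g j) ^ 2
      = (K : ℝ) * (g i) ^ 2 - 2 * g i * (∑ j, g j) + ∑ j, (g j) ^ 2 := by
    intro i
    have h : ∀ j : Fin K, (g i - g j) ^ 2
        = (g i) ^ 2 - 2 * g i * g j + (g j) ^ 2 := fun j => by ring
    rw [Finset.sum_congr rfl (fun j _ => h j), Finset.sum_add_distrib,
      Finset.sum_sub_distrib, Finset.sum_const, ← Finset.mul_sum,
      Finset.card_univ, Fintype.card_fin, nsmul_eq_mul]
  rw [Finset.sum_congr rfl (fun i _ => h1 i), Finset.sum_add_distrib,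
    Finset.sum_sub_distrib, Finset.sum_const, ← Finset.mul_sum,
    Finset.card_univ, Fintype.card_fin, nsmul_eq_mul]
  rw [← Finset.sum_mul, ← Finset.mul_sum]
  ring

/-- For `k ≠ ℓ`, the Aitchison distance between the smoothed one-hot vectors is
`d_A(μ^(k), μ^(ℓ)) = √2 · L`, equivalently `d_A(μ^(k), μ^(ℓ))² = 2L²`,
where `L := log(1 + Kλ/(1−λ))`. -/
theorem aitchisonDist_smoothOneHot
    (K : ℕ) (hK : 2 ≤ K) (lam : ℝ) (hlam : lam ∈ Set.Ioo (0 : ℝ) 1)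
    (k l : Fin K) (hkl : k ≠ l) :
    aitchisonDist K (smoothOneHot K lam k) (smoothOneHot K lam l)
        = Real.sqrt 2 * Real.log (1 + (K : ℝ) * lam / (1 - lam)) ∧
      (aitchisonDist K (smoothOneHot K lam k) (smoothOneHot K lam l)) ^ 2
        = 2 * (Real.log (1 + (K : ℝ) * lam / (1 - lam))) ^ 2 := by
  obtain ⟨hl0, hl1⟩ := hlam
  have hKpos : (0 : ℝ) < (K : ℝ) := by
    have : (2 : ℝ) ≤ (K : ℝ) := by exact_mod_cast hK
    linarith
  have hKne : (K : ℝ) ≠ 0 := ne_of_gt hKpos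
  have h1l : (1 : ℝ) - lam ≠ 0 := by linarith
  set b : ℝ := (1 - lam) / (K : ℝ) with hb
  have hbpos : 0 < b := div_pos (by linarith) hKpos
  have hapos : 0 < lam + b := by linarith
  set L : ℝ := Real.log (1 + (K : ℝ) * lam / (1 - lam)) with hLdef
  have hLnonneg : 0 ≤ L := by
    apply Real.log_nonneg
    have : 0 ≤ (K : ℝ) * lam / (1 - lam) :=
      div_nonneg (by positivity) (by linarith)
    linarith
  have hab : (lam + b) / b = 1 + (K : ℝ) * lam / (1 - lam) := by
    rw [hb]
    field_simp
    ring
  have hlog : Real.log (lam + b) - Real.log b = L := by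
    rw [hLdef, ← hab, Real.log_div (ne_of_gt hapos) (ne_of_gt hbpos)]
  have hx : ∀ (m : Fin K) (i : Fin K),
      smoothOneHot K lam m i = if i = m then lam + b else b := by
    intro m i
    simp only [smoothOneHot, hb]
    split <;> ring
  have hxpos : ∀ (m : Fin K) (i : Fin K), 0 < smoothOneHot K lam m i := by
    intro m i; rw [hx]; split <;> assumption
  set g : Fin K → ℝ :=
    fun i => L * ((if i = k then 1 else 0) - (if i = l then 1 else 0)) with hg
  have hfg : ∀ i : Fin K,
      Real.log (smoothOneHot K lam k i) - Real.log (smoothOneHot K lam l i)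
        = g i := by
    intro i
    rw [hx, hx]
    simp only [hg]
    by_cases hik : i = k
    · have hil : ¬ i = l := by rw [hik]; exact hkl
      rw [if_pos hik, if_neg hil, if_pos hik, if_neg hil]
      rw [show (L * ((1:ℝ) - 0)) = L by ring]
      exact hlog
    · by_cases hil : i = l
      · rw [if_neg hik, if_pos hil, if_neg hik, if_pos hil]
        rw [show (L * ((0:ℝ) - 1)) = -L by ring]
        linarith [hlog]
      · rw [if_neg hik, if_neg hil, if_neg hik, if_neg hil]
        ring
  have hterm : ∀ i j : Fin K,
      Real.log (smoothOneHot K lam k i / smoothOneHot K lam k j)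
        - Real.log (smoothOneHot K lam l i / smoothOneHot K lam l j)
        = g i - g j := by
    intro i j
    rw [Real.log_div (ne_of_gt (hxpos k i)) (ne_of_gt (hxpos k j)),
      Real.log_div (ne_of_gt (hxpos l i)) (ne_of_gt (hxpos l j)),
      ← hfg i, ← hfg j]
    ring
  have hsumg : ∑ i, g i = 0 := by
    simp only [hg]
    rw [← Finset.mul_sum, Finset.sum_sub_distrib]
    simp [Finset.sum_ite_eq']
  have hsumg2 : ∑ i, (g i) ^ 2 = 2 * L ^ 2 := by
    have h : ∀ i : Fin K, (g i) ^ 2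
        = L ^ 2 * ((if i = k then 1 else 0) + (if i = l then 1 else 0)) := by
      intro i
      simp only [hg]
      by_cases hik : i = k
      · have hil : ¬ i = l := by rw [hik]; exact hkl
        simp only [if_pos hik, if_neg hil]; ring
      · by_cases hil : i = l
        · simp only [if_neg hik, if_pos hil]; ring
        · simp only [if_neg hik, if_neg hil]; ring
    rw [Finset.sum_congr rfl (fun i _ => h i), ← Finset.mul_sum,
      Finset.sum_add_distrib]
    simp [Finset.sum_ite_eq']
    ring
  have hinner : (1 / (2 * (K : ℝ))) *
      ∑ i, ∑ j, (Real.log (smoothOneHot K lam k i / smoothOneHot K lam k j)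
        - Real.log (smoothOneHot K lam l i / smoothOneHot K lam l j)) ^ 2
      = 2 * L ^ 2 := by
    have heq : ∑ i, ∑ j, (Real.log (smoothOneHot K lam k i / smoothOneHot K lam k j)
        - Real.log (smoothOneHot K lam l i / smoothOneHot K lam l j)) ^ 2
        = ∑ i, ∑ j, (g i - g j) ^ 2 := by
      apply Finset.sum_congr rfl
      intro i _
      apply Finset.sum_congr rfl
      intro j _
      rw [hterm]
    rw [heq, sum_sq_expand, hsumg, hsumg2]
    field_simp
    ring
  have hdist : aitchisonDist K (smoothOneHot K lam k) (smoothOneHot K lam l)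
      = Real.sqrt 2 * L := by
    rw [aitchisonDist, hinner,
      Real.sqrt_mul (by norm_num : (0:ℝ) ≤ 2) (L ^ 2), Real.sqrt_sq hLnonneg]
  refine ⟨hdist, ?_⟩
  rw [hdist]
  rw [mul_pow]
  rw [Real.sq_sqrt (by norm_num : (0:ℝ) ≤ 2)]
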